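/- For every finite set D of definite clauses, every Γ, every set A of annotated atoms, every atom P(t̄), and every k ∈ ℕ: μ(D) ⊨ ⟦Γ, A⟧_k ∧ P(t̄) ⇒ ⟦Γ, A ∪ {P^{∅,∘}(t̄)}⟧_k, i.e., the implication holds under the least predicate interpretation μ(D) for every integer assignment. -/

import Mathlib

/-! Machinery for the inductive proof system for Horn constraint solving. -/

/-- Term variables. -/
abbrev Var := ℕ

/-- Assignments of integers to term variables. -/
abbrev Assign := Var → ℤ

/-- Linear integer arithmetic terms. -/
inductive Term : Type where
  | var : Var → Term
  | const : ℤ → Term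
  | add : Term → Term → Term

def Term.eval (s : Assign) : Term → ℤ
  | .var x => s x
  | .const n => n
  | .add t u => t.eval s + u.eval s

def Term.fv : Term → Finset Var
  | .var x => {x}
  | .const _ => ∅
  | .add t u => t.fv ∪ u.fv

/-- Substitutions of terms for term variables. -/
abbrev Subst := Var → Term

def Term.subst (σ : Subst) : Term → Term
  | .var x => σ x
  | .const n => .const n
  | .add t u => .add (t.subst σ) (u.subst σ)

/-- Atom-free linear integer arithmetic formulas; the universal quantifier `all` over
term variables is allowed where explicitly used. -/
inductive Fml : Type where
  | le : Term → Term → Fml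
  | tt : Fml
  | ff : Fml
  | not : Fml → Fml
  | and : Fml → Fml → Fml
  | or : Fml → Fml → Fml
  | all : Var → Fml → Fml

def Fml.eval : Fml → Assign → Prop
  | .le t u, s => t.eval s ≤ u.eval s
  | .tt, _ => True
  | .ff, _ => False
  | .not f, s => ¬ f.eval s
  | .and f g, s => f.eval s ∧ g.eval s
  | .or f g, s => f.eval s ∨ g.eval s
  | .all x f, s => ∀ n : ℤ, f.eval (Function.update s x n)

def Fml.fv : Fml → Finset Var
  | .le t u => t.fv ∪ u.fv
  | .tt => ∅
  | .ff => ∅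
  | .not f => f.fv
  | .and f g => f.fv ∪ g.fv
  | .or f g => f.fv ∪ g.fv
  | .all x f => f.fv.erase x

def Fml.subst : Fml → Subst → Fml
  | .le t u, σ => .le (t.subst σ) (u.subst σ)
  | .tt, _ => .tt
  | .ff, _ => .ff
  | .not f, σ => .not (f.subst σ)
  | .and f g, σ => .and (f.subst σ) (g.subst σ)
  | .or f g, σ => .or (f.subst σ) (g.subst σ)
  | .all x f, σ => .all x (f.subst (Function.update σ x (Term.var x)))

/-- Equality `t = u` of terms, encoded in QFLIA. -/
def Fml.eqT (t u : Term) : Fml := .and (.le t u) (.le u t)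

def Fml.conjList : List Fml → Fml
  | [] => .tt
  | f :: fs => .and f (Fml.conjList fs)

/-- Universal closure `∀x̄.f` over a list of variables. -/
def Fml.alls (xs : List Var) (f : Fml) : Fml := xs.foldr Fml.all f

/-- Componentwise equality `t̄ = ū` of two tuples of terms, as a formula. -/
def argsEqFml {n : ℕ} (ts us : Fin n → Term) : Fml :=
  Fml.conjList ((List.finRange n).map fun i => Fml.eqT (ts i) (us i))

/-- An atom `P(t̄)`. -/
structure Atom (PV : Type) (ar : PV → ℕ) : Type where
  pv : PV
  args : Fin (ar pv) → Term

/-- An annotated atom `P^{M,α}(t̄)`: `M` is a finite set of induction identifiers and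
`idn` is an induction identifier (`none` encodes the special identifier `∘`).
Annotations do not affect semantics. -/
structure AAtom (PV : Type) (ar : PV → ℕ) : Type where
  pv : PV
  args : Fin (ar pv) → Term
  M : Finset (Option ℕ)
  idn : Option ℕ

/-- A predicate interpretation maps each predicate variable `P` to a subset of `ℤ^(ar P)`. -/
abbrev Interp (PV : Type) (ar : PV → ℕ) := ∀ P : PV, Set (Fin (ar P) → ℤ)

variable {PV : Type} {ar : PV → ℕ}

def Atom.sat (ρ : Interp PV ar) (s : Assign) (a : Atom PV ar) : Prop :=
  (fun i => (a.args i).eval s) ∈ ρ a.pv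

def AAtom.sat (ρ : Interp PV ar) (s : Assign) (a : AAtom PV ar) : Prop :=
  (fun i => (a.args i).eval s) ∈ ρ a.pv

/-- The denotation `⟨P, t̄⟩` of an atom under an assignment (predicate variable together
with the tuple of values of the arguments). -/
def Atom.den (s : Assign) (a : Atom PV ar) : (Q : PV) × (Fin (ar Q) → ℤ) :=
  ⟨a.pv, fun i => (a.args i).eval s⟩

def AAtom.den (s : Assign) (a : AAtom PV ar) : (Q : PV) × (Fin (ar Q) → ℤ) :=
  ⟨a.pv, fun i => (a.args i).eval s⟩

def AList.sat (ρ : Interp PV ar) (s : Assign) (A : List (AAtom PV ar)) : Prop :=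
  ∀ a ∈ A, a.sat ρ s

/-- Satisfaction of a head: `⊥` (encoded `none`) or an atom. -/
def headSat (ρ : Interp PV ar) (s : Assign) : Option (Atom PV ar) → Prop
  | none => False
  | some a => a.sat ρ s

def Atom.fvs (a : Atom PV ar) : Finset Var := Finset.univ.sup fun i => (a.args i).fv
def AAtom.fvs (a : AAtom PV ar) : Finset Var := Finset.univ.sup fun i => (a.args i).fv

def headFvs : Option (Atom PV ar) → Finset Var
  | none => ∅
  | some a => a.fvs

def AList.fvs (A : List (AAtom PV ar)) : Finset Var := A.foldr (fun a t => a.fvs ∪ t) ∅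
def AtomList.fvs (A : List (Atom PV ar)) : Finset Var := A.foldr (fun a t => a.fvs ∪ t) ∅

def Atom.subst (σ : Subst) (a : Atom PV ar) : Atom PV ar :=
  ⟨a.pv, fun i => (a.args i).subst σ⟩

def AAtom.subst (σ : Subst) (a : AAtom PV ar) : AAtom PV ar :=
  ⟨a.pv, fun i => (a.args i).subst σ, a.M, a.idn⟩

def AList.subst (σ : Subst) (A : List (AAtom PV ar)) : List (AAtom PV ar) :=
  A.map (AAtom.subst σ)

def AtomList.subst (σ : Subst) (A : List (Atom PV ar)) : List (Atom PV ar) :=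
  A.map (Atom.subst σ)

def headSubst (σ : Subst) : Option (Atom PV ar) → Option (Atom PV ar)
  | none => none
  | some a => some (a.subst σ)

/-- `A^{M,α}`: annotate every atom of `A` with `M` and `α`. -/
def annotate (A : List (Atom PV ar)) (M : Finset (Option ℕ)) (i : Option ℕ) :
    List (AAtom PV ar) :=
  A.map fun a => ⟨a.pv, a.args, M, i⟩

/-- A renaming of variables, as a substitution. -/
def renSub (ν : Var → Var) : Subst := fun x => Term.var (ν x)

/-- A definite clause `P(t̄) ⇐ φ' ∧ ⋀A'`. -/
structure DClause (PV : Type) (ar : PV → ℕ) : Type where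
  pv : PV
  args : Fin (ar pv) → Term
  fml : Fml
  atoms : List (Atom PV ar)

def DClause.sat (ρ : Interp PV ar) (c : DClause PV ar) : Prop :=
  ∀ s : Assign, (∀ a ∈ c.atoms, a.sat ρ s) ∧ c.fml.eval s →
    (fun i => (c.args i).eval s) ∈ ρ c.pv

def DClause.fvs (c : DClause PV ar) : Finset Var :=
  (Finset.univ.sup fun i => (c.args i).fv) ∪ c.fml.fv ∪ AtomList.fvs c.atoms

/-- `μ(D)`: the least predicate interpretation satisfying every clause of `D`. -/
def muD (D : List (DClause PV ar)) : Interp PV ar :=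
  sInf {ρ : Interp PV ar | ∀ c ∈ D, c.sat ρ}

/-- One unfolding step of `D`:
`Dstep D ρ P = {x̄ | ρ ⊨ D(P)(x̄)}` where `D(P)(x̄) = ⋁ᵢ ∃ȳᵢ.(φᵢ ∧ ⋀Aᵢ ∧ x̄ = t̄ᵢ)`. -/
def Dstep (D : List (DClause PV ar)) (ρ : Interp PV ar) : Interp PV ar :=
  fun P => { v | ∃ c ∈ D, ∃ s : Assign,
    (∀ a ∈ c.atoms, a.sat ρ s) ∧ c.fml.eval s ∧
    (⟨c.pv, fun i => (c.args i).eval s⟩ : (Q : PV) × (Fin (ar Q) → ℤ)) = ⟨P, v⟩ }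

/-- Guards of elements of `Γ`: `•` for user-specified lemmas, `α ▷ P(t̄)` for
induction hypotheses. -/
inductive Guard (PV : Type) (ar : PV → ℕ) : Type where
  | bullet : Guard PV ar
  | hyp : ℕ → Atom PV ar → Guard PV ar

/-- An element `(g, A, φ, h)` of `Γ`. -/
structure GTuple (PV : Type) (ar : PV → ℕ) : Type where
  g : Guard PV ar
  A : List (AAtom PV ar)
  fml : Fml
  h : Option (Atom PV ar)

def Guard.fvs : Guard PV ar → Finset Var
  | .bullet => ∅
  | .hyp _ a => a.fvs

def GTuple.fvs (γ : GTuple PV ar) : Finset Var :=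
  γ.g.fvs ∪ AList.fvs γ.A ∪ γ.fml.fv ∪ headFvs γ.h

def Gamma.fvs (Γ : List (GTuple PV ar)) : Finset Var := Γ.foldr (fun γ t => γ.fvs ∪ t) ∅

/-- The free term variables of a judgment `D; Γ; A; φ ⊢ h`. -/
def judgFvs (Γ : List (GTuple PV ar)) (A : List (AAtom PV ar)) (φ : Fml)
    (h : Option (Atom PV ar)) : Finset Var :=
  Gamma.fvs Γ ∪ AList.fvs A ∪ φ.fv ∪ headFvs h

/-- `⟦γ⟧(A')`: the semantics of a single element of `Γ` instantiated for the atoms of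
`A'` (whose terms are evaluated under the outer assignment `s`); the tuple's own
variables are universally quantified via a fresh assignment `s'`. -/
def GTuple.sem (ρ : Interp PV ar) (A' : List (AAtom PV ar)) (s : Assign)
    (γ : GTuple PV ar) : Prop :=
  match γ.g with
  | .bullet =>
      ∀ s' : Assign, AList.sat ρ s' γ.A ∧ γ.fml.eval s' → headSat ρ s' γ.h
  | .hyp α a₀ =>
      ∀ b ∈ A', (some α : Option ℕ) ∈ b.M →
        ∀ s' : Assign,
          AList.sat ρ s' γ.A ∧ γ.fml.eval s' ∧ Atom.den s' a₀ = AAtom.den s b →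
          headSat ρ s' γ.h

/-- `⟦Γ⟧(A')`. -/
def GammaSem (ρ : Interp PV ar) (Γ : List (GTuple PV ar)) (A' : List (AAtom PV ar))
    (s : Assign) : Prop :=
  ∀ γ ∈ Γ, γ.sem ρ A' s

/-- `⟦Γ, A⟧_k`: the conjunction of the elements of `Γ` instantiated for the atoms
occurring in the `k`-times unfolding of `A` (by the definite clauses `D`). -/
def KSem (D : List (DClause PV ar)) (ρ : Interp PV ar) (Γ : List (GTuple PV ar)) :
    ℕ → List (AAtom PV ar) → Assign → Prop
  | 0, A, s => GammaSem ρ Γ A s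
  | k + 1, A, s =>
      GammaSem ρ Γ A s ∧
      ∀ b ∈ A, ∃ c ∈ D, ∃ s' : Assign,
        c.fml.eval s' ∧
        (⟨c.pv, fun i => (c.args i).eval s'⟩ : (Q : PV) × (Fin (ar Q) → ℤ)) =
          AAtom.den s b ∧
        KSem D ρ Γ k (annotate c.atoms (insert b.idn b.M) none) s'

/-- `⊨ φ ⇒ In(P(t̄), A)` where `In(P(t̄), A) = ⋁_{P(t̄') ∈ A} t̄ = t̄'`. -/
def validIn (φ : Fml) (a : Atom PV ar) (A : List (AAtom PV ar)) : Prop :=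
  ∀ s : Assign, φ.eval s → ∃ b ∈ A, Atom.den s a = AAtom.den s b

/-- `⊨ φ ⇒ In(σg, A)`. -/
def validInG (φ : Fml) (σ : Subst) (g : Guard PV ar) (A : List (AAtom PV ar)) : Prop :=
  match g with
  | .bullet => True
  | .hyp α a => ∀ s : Assign, φ.eval s →
      ∃ b ∈ A, (some α : Option ℕ) ∈ b.M ∧ Atom.den s (a.subst σ) = AAtom.den s b

/-- `⊨ φ ⇒ Sub(A₁, A₂)` where `Sub(A₁, A₂) = ⋀_{P(t̄) ∈ A₁} In(P(t̄), A₂)`. -/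
def validSub (φ : Fml) (A₁ A₂ : List (AAtom PV ar)) : Prop :=
  ∀ s : Assign, φ.eval s → ∀ a ∈ A₁, ∃ b ∈ A₂, AAtom.den s a = AAtom.den s b

def validSubAtoms (φ : Fml) (A₁ : List (Atom PV ar)) (A₂ : List (AAtom PV ar)) : Prop :=
  ∀ s : Assign, φ.eval s → ∀ a ∈ A₁, ∃ b ∈ A₂, Atom.den s a = AAtom.den s b

/-- `⊨ φ ⇒ ∃x̄.ψ`, where `x̄` is a given finite set of variables. -/
def validExists (φ : Fml) (ψ : Fml) (xs : Finset Var) : Prop :=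
  ∀ s : Assign, φ.eval s → ∃ s' : Assign, (∀ x, x ∉ xs → s' x = s x) ∧ ψ.eval s'

/-- The induction identifier `α` occurs in `A`. -/
def occursA (α : ℕ) (A : List (AAtom PV ar)) : Prop :=
  ∃ b ∈ A, (some α : Option ℕ) ∈ b.M ∨ b.idn = some α

def Guard.ident : Guard PV ar → Option ℕ
  | .bullet => none
  | .hyp α _ => some α

/-- The induction identifier `α` occurs in `Γ`. -/
def occursG (α : ℕ) (Γ : List (GTuple PV ar)) : Prop :=
  ∃ γ ∈ Γ, γ.g.ident = some α ∨ occursA α γ.A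

lemma mem_muD_iff (D : List (DClause PV ar)) (P : PV) (v : Fin (ar P) → ℤ) :
    v ∈ muD D P ↔ ∀ ρ : Interp PV ar, (∀ c ∈ D, c.sat ρ) → v ∈ ρ P := by
  simp [muD, sInf_apply, iInf_apply]

lemma muD_le {D : List (DClause PV ar)} {ρ : Interp PV ar} (hρ : ∀ c ∈ D, c.sat ρ) :
    ∀ P, muD D P ⊆ ρ P := fun P v hv => (mem_muD_iff D P v).mp hv ρ hρ

lemma muD_model (D : List (DClause PV ar)) : ∀ c ∈ D, c.sat (muD D) := by
  intro c hc s ⟨hA, hf⟩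
  rw [mem_muD_iff]
  intro ρ hρ
  exact hρ c hc s ⟨fun a ha => muD_le hρ a.pv (hA a ha), hf⟩

/-- `Dstep D (muD D)` is also a model of `D`, hence `muD D ≤ Dstep D (muD D)`:
the least model can be unfolded. -/
lemma muD_unfold {D : List (DClause PV ar)} {P : PV} {v : Fin (ar P) → ℤ}
    (h : v ∈ muD D P) :
    ∃ c ∈ D, ∃ s' : Assign, (∀ a ∈ c.atoms, a.sat (muD D) s') ∧ c.fml.eval s' ∧
      (⟨c.pv, fun i => (c.args i).eval s'⟩ : (Q : PV) × (Fin (ar Q) → ℤ)) = ⟨P, v⟩ := by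
  have hstep_le : ∀ Q, Dstep D (muD D) Q ⊆ muD D Q := by
    intro Q w hw
    obtain ⟨c, hc, s', hA, hf, hden⟩ := hw
    have := muD_model D c hc s' ⟨hA, hf⟩
    cases hden
    exact this
  have hmodel : ∀ c ∈ D, c.sat (Dstep D (muD D)) := by
    intro c hc s ⟨hA, hf⟩
    exact ⟨c, hc, s, fun a ha => hstep_le a.pv (hA a ha), hf, rfl⟩
  exact (mem_muD_iff D P v).mp h _ hmodel

/-- If no atom of `A'` carries a proper induction identifier in its `M`, then
`⟦Γ⟧(A')` reduces to the bullet part of `Γ`. -/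
lemma gammaSem_of_noM (ρ : Interp PV ar) (Γ : List (GTuple PV ar))
    (hB : ∀ γ ∈ Γ, γ.g = Guard.bullet →
      ∀ s' : Assign, AList.sat ρ s' γ.A ∧ γ.fml.eval s' → headSat ρ s' γ.h)
    (A : List (AAtom PV ar)) (s : Assign)
    (hA : ∀ b ∈ A, ∀ α : ℕ, (some α : Option ℕ) ∉ b.M) :
    GammaSem ρ Γ A s := by
  intro γ hγ
  unfold GTuple.sem
  cases hg : γ.g with
  | bullet => exact hB γ hγ hg
  | hyp α a₀ => exact fun b hb hbM => absurd hbM (hA b hb α)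

lemma ksem_of_noM (D : List (DClause PV ar)) (Γ : List (GTuple PV ar))
    (hB : ∀ γ ∈ Γ, γ.g = Guard.bullet →
      ∀ s' : Assign, AList.sat (muD D) s' γ.A ∧ γ.fml.eval s' → headSat (muD D) s' γ.h) :
    ∀ k (A : List (AAtom PV ar)) (s : Assign),
      (∀ b ∈ A, (∀ α : ℕ, (some α : Option ℕ) ∉ b.M) ∧ b.idn = none ∧ b.sat (muD D) s) →
      KSem D (muD D) Γ k A s := by
  intro k
  induction k with
  | zero =>
    intro A s hA
    exact gammaSem_of_noM _ _ hB A s (fun b hb => (hA b hb).1)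
  | succ k ih =>
    intro A s hA
    refine ⟨gammaSem_of_noM _ _ hB A s (fun b hb => (hA b hb).1), ?_⟩
    intro b hb
    obtain ⟨hM, hidn, hsat⟩ := hA b hb
    obtain ⟨c, hc, s', hcat, hcf, hden⟩ := muD_unfold hsat
    refine ⟨c, hc, s', hcf, hden, ih _ _ ?_⟩
    intro b' hb'
    obtain ⟨a', ha', rfl⟩ := List.mem_map.mp hb'
    refine ⟨?_, rfl, hcat a' ha'⟩
    intro α hα
    rcases Finset.mem_insert.mp hα with h | h
    · rw [hidn] at h; exact Option.some_ne_none α h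
    · exact (hM α) h

lemma ksem_gammaSem {D : List (DClause PV ar)} {Γ : List (GTuple PV ar)} {k : ℕ}
    {A : List (AAtom PV ar)} {s : Assign} (h : KSem D (muD D) Γ k A s) :
    GammaSem (muD D) Γ A s := by
  cases k with
  | zero => exact h
  | succ k => exact h.1

/-- `μ(D) ⊨ ⟦Γ, A⟧_k ∧ P(t̄) ⇒ ⟦Γ, A ∪ {P^{∅,∘}(t̄)}⟧_k`. -/
theorem ksem_extend_atom (D : List (DClause PV ar)) (Γ : List (GTuple PV ar))
    (A : List (AAtom PV ar)) (a : Atom PV ar) (k : ℕ) :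
    ∀ s : Assign,
      KSem D (muD D) Γ k A s ∧ a.sat (muD D) s →
      KSem D (muD D) Γ k (⟨a.pv, a.args, ∅, none⟩ :: A) s := by
  intro s ⟨hK, ha⟩
  have hG : GammaSem (muD D) Γ A s := ksem_gammaSem hK
  have hB : ∀ γ ∈ Γ, γ.g = Guard.bullet →
      ∀ s' : Assign, AList.sat (muD D) s' γ.A ∧ γ.fml.eval s' → headSat (muD D) s' γ.h := by
    intro γ hγ hg
    have := hG γ hγ
    unfold GTuple.sem at this
    rw [hg] at this
    exact this
  have hG' : GammaSem (muD D) Γ (⟨a.pv, a.args, ∅, none⟩ :: A) s := by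
    intro γ hγ
    have hold := hG γ hγ
    unfold GTuple.sem at hold ⊢
    cases hg : γ.g with
    | bullet => rw [hg] at hold; exact hold
    | hyp α a₀ =>
      rw [hg] at hold
      intro b hb hbM
      rcases List.mem_cons.mp hb with rfl | hb'
      · exact absurd hbM (Finset.notMem_empty _)
      · exact hold b hb' hbM
  cases k with
  | zero => exact hG'
  | succ k =>
    refine ⟨hG', ?_⟩
    intro b hb
    rcases List.mem_cons.mp hb with rfl | hb'
    · obtain ⟨c, hc, s', hcat, hcf, hden⟩ := muD_unfold ha
      refine ⟨c, hc, s', hcf, hden, ?_⟩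
      refine ksem_of_noM D Γ hB k _ s' ?_
      intro b' hb'
      obtain ⟨a', ha', rfl⟩ := List.mem_map.mp hb'
      refine ⟨?_, rfl, hcat a' ha'⟩
      intro α hα
      rcases Finset.mem_insert.mp hα with h | h
      · exact Option.some_ne_none α h
      · exact absurd h (Finset.notMem_empty _)
    · exact hK.2 b hb'
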